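/- Let Z be an abelian group, let B ⊆ Z be finite and nonempty, and let G ⊆ B × B be nonempty. Then E(B) ≥ |G|² / (|−(G)| · |B|³). -/

import Mathlib

open Finset Pointwise

/-- The additive energy `E(A) = |A|⁻³ · |{(a₁,a₂,a₃,a₄) ∈ A⁴ : a₁ − a₂ = a₃ − a₄}|`. -/
noncomputable def energy {Z : Type*} [AddCommGroup Z] [DecidableEq Z] (A : Finset Z) : ℝ :=
  (((A ×ˢ A ×ˢ A ×ˢ A).filter
      (fun x => x.1 - x.2.1 = x.2.2.1 - x.2.2.2)).card : ℝ) / (A.card : ℝ) ^ 3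

/-- For nonempty `G ⊆ B × B`, `E(B) ≥ |G|²/(|−(G)|·|B|³)`, where `−(G) = {a − b : (a,b) ∈ G}`. -/
theorem statement7 {Z : Type*} [AddCommGroup Z] [DecidableEq Z]
    (B : Finset Z) (hB : B.Nonempty) (G : Finset (Z × Z)) (hG : G.Nonempty)
    (hGB : G ⊆ B ×ˢ B) :
    (G.card : ℝ) ^ 2 / (((G.image (fun p => p.1 - p.2)).card : ℝ) * (B.card : ℝ) ^ 3)
      ≤ energy B := by
  classical
  set D := G.image (fun p => p.1 - p.2) with hD
  set I := (B ×ˢ B).image (fun p => p.1 - p.2) with hI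
  set N := ((B ×ˢ B ×ˢ B ×ˢ B).filter
      (fun x => x.1 - x.2.1 = x.2.2.1 - x.2.2.2)).card with hN
  set g : Z → ℕ := fun d => (G.filter (fun p => p.1 - p.2 = d)).card with hg
  set f : Z → ℕ := fun d => ((B ×ˢ B).filter (fun p => p.1 - p.2 = d)).card with hf
  have hDI : D ⊆ I := image_subset_image hGB
  -- |G| = ∑ g
  have h1 : G.card = ∑ d ∈ D, g d :=
    card_eq_sum_card_fiberwise (fun p hp => mem_image_of_mem _ hp)
  have h2 : ∀ d, g d ≤ f d := fun d =>
    card_le_card (filter_subset_filter _ hGB)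
  -- N = ∑_{d ∈ I} f d ^ 2
  have h3 : N = ∑ d ∈ I, f d ^ 2 := by
    have := card_eq_sum_card_fiberwise (s := (B ×ˢ B ×ˢ B ×ˢ B).filter
        (fun x => x.1 - x.2.1 = x.2.2.1 - x.2.2.2)) (t := I)
        (f := fun x => x.1 - x.2.1) ?_
    · rw [hN, this]
      refine Finset.sum_congr rfl fun d _ => ?_
      rw [sq, ← card_product]
      refine Finset.card_bij'
        (fun x _ => ((x.1, x.2.1), (x.2.2.1, x.2.2.2)))
        (fun y _ => (y.1.1, y.1.2, y.2.1, y.2.2)) ?_ ?_ ?_ ?_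
      · intro a ha
        simp only [mem_filter, mem_product, hf] at ha ⊢
        obtain ⟨⟨⟨hb1, hb2, hb3, hb4⟩, he⟩, hd⟩ := ha
        exact ⟨⟨⟨hb1, hb2⟩, hd⟩, ⟨hb3, hb4⟩, he ▸ hd⟩
      · intro a ha
        simp only [mem_filter, mem_product, hf] at ha ⊢
        obtain ⟨⟨⟨hb1, hb2⟩, hd1⟩, ⟨hb3, hb4⟩, hd2⟩ := ha
        exact ⟨⟨⟨hb1, hb2, hb3, hb4⟩, hd1.trans hd2.symm⟩, hd1⟩
      · intros; rfl
      · intros; rfl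
    · intro x hx
      simp only [mem_coe, mem_filter, mem_product] at hx
      exact mem_image_of_mem _ (mk_mem_product hx.1.1 hx.1.2.1)
  -- key inequality over ℝ
  have key : (G.card : ℝ) ^ 2 ≤ (D.card : ℝ) * N := by
    have hcs : (∑ d ∈ D, (g d : ℝ)) ^ 2 ≤ (D.card : ℝ) * ∑ d ∈ D, (g d : ℝ) ^ 2 :=
      sq_sum_le_card_mul_sum_sq
    have hgf : ∑ d ∈ D, (g d : ℝ) ^ 2 ≤ ∑ d ∈ D, (f d : ℝ) ^ 2 := by
      refine Finset.sum_le_sum fun d _ => ?_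
      have := h2 d
      have : (g d : ℝ) ≤ f d := by exact_mod_cast this
      nlinarith [Nat.cast_nonneg (α := ℝ) (g d)]
    have hfN : ∑ d ∈ D, (f d : ℝ) ^ 2 ≤ (N : ℝ) := by
      rw [h3]
      push_cast
      exact Finset.sum_le_sum_of_subset_of_nonneg hDI (by intros; positivity)
    calc (G.card : ℝ) ^ 2 = (∑ d ∈ D, (g d : ℝ)) ^ 2 := by rw [h1]; push_cast; ring
      _ ≤ (D.card : ℝ) * ∑ d ∈ D, (g d : ℝ) ^ 2 := hcs
      _ ≤ (D.card : ℝ) * ∑ d ∈ D, (f d : ℝ) ^ 2 := by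
          exact mul_le_mul_of_nonneg_left hgf (by positivity)
      _ ≤ (D.card : ℝ) * N := mul_le_mul_of_nonneg_left hfN (by positivity)
  -- conclude
  have hDpos : (0 : ℝ) < D.card := by
    have : D.Nonempty := hG.image _
    exact_mod_cast this.card_pos
  have hBpos : (0 : ℝ) < B.card := by exact_mod_cast hB.card_pos
  rw [energy, ← hN, div_le_div_iff₀ (by positivity) (by positivity)]
  nlinarith [pow_pos hBpos 3]
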